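/- Let 0 < x* and let g, D : ℝ → ℝ be differentiable on (0, x*) with g convex on (0,x*), D concave on (0,x*), D(x) → 0 as x → 0⁺, and g'(x) = D'(x) - 1 for all x ∈ (0, x*). Then there exists ρ ∈ ℝ such that D(x) = (1-ρ)·x for all x ∈ (0, x*), and g(x) - g(y) = -ρ(x - y) for all x, y ∈ (0, x*) (g is affine with slope -ρ). -/

import Mathlib

theorem stmt_13 (xs : ℝ) (hxs : 0 < xs) (g D : ℝ → ℝ)
    (hgdiff : DifferentiableOn ℝ g (Set.Ioo 0 xs))
    (hDdiff : DifferentiableOn ℝ D (Set.Ioo 0 xs))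
    (hgconv : ConvexOn ℝ (Set.Ioo 0 xs) g)
    (hDconc : ConcaveOn ℝ (Set.Ioo 0 xs) D)
    (hDlim : Filter.Tendsto D (nhdsWithin 0 (Set.Ioi 0)) (nhds 0))
    (hder : ∀ x ∈ Set.Ioo 0 xs, deriv g x = deriv D x - 1) :
    ∃ ρ : ℝ, (∀ x ∈ Set.Ioo 0 xs, D x = (1 - ρ) * x) ∧
      (∀ x ∈ Set.Ioo 0 xs, ∀ y ∈ Set.Ioo 0 xs, g x - g y = -ρ * (x - y)) := by
  set s := Set.Ioo (0:ℝ) xs with hs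
  have hsopen : IsOpen s := isOpen_Ioo
  have hdiffat_g : ∀ x ∈ s, DifferentiableAt ℝ g x := fun x hx =>
    (hgdiff x hx).differentiableAt (hsopen.mem_nhds hx)
  have hdiffat_D : ∀ x ∈ s, DifferentiableAt ℝ D x := fun x hx =>
    (hDdiff x hx).differentiableAt (hsopen.mem_nhds hx)
  have hmono : MonotoneOn (deriv g) s := hgconv.monotoneOn_deriv hdiffat_g
  have hanti : AntitoneOn (deriv D) s := hDconc.antitoneOn_deriv hdiffat_D
  set m : ℝ := xs / 2 with hm
  have hms : m ∈ s := ⟨by positivity, by linarith⟩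
  set c : ℝ := deriv g m with hc
  -- deriv g is constant c on s
  have hconst : ∀ x ∈ s, deriv g x = c := by
    intro x hx
    rcases le_total x m with h | h
    · have h1 := hmono hx hms h
      have h2 : deriv g m ≤ deriv g x := by
        have := hanti hx hms h
        rw [hder x hx, hder m hms]; linarith
      linarith
    · have h1 := hmono hms hx h
      have h2 : deriv g x ≤ deriv g m := by
        have := hanti hms hx h
        rw [hder x hx, hder m hms]; linarith
      linarith
  have hconstD : ∀ x ∈ s, deriv D x = c + 1 := by
    intro x hx
    have := hder x hx
    have h2 := hconst x hx
    linarith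
  -- g x - c x is constant on s
  have hgaff : ∀ x ∈ s, ∀ y ∈ s, g x - c * x = g y - c * y := by
    intro x hx y hy
    have hcv : Convex ℝ s := convex_Ioo 0 xs
    have hdh : DifferentiableOn ℝ (fun z => g z - c * z) s :=
      hgdiff.sub ((differentiable_id.const_mul c).differentiableOn)
    have := hcv.is_const_of_fderivWithin_eq_zero hdh ?_ hx hy
    · exact this
    intro z hz
    have hd : HasDerivAt (fun z => g z - c * z) 0 z := by
      have h1 : HasDerivAt g (deriv g z) z := (hdiffat_g z hz).hasDerivAt
      have h2 : HasDerivAt (fun z => c * z) c z := by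
        simpa using (hasDerivAt_id z).const_mul c
      have := h1.sub h2
      rw [hconst z hz, sub_self] at this
      exact this
    rw [fderivWithin_of_isOpen hsopen hz]
    exact hd.hasFDerivAt.fderiv.trans (by ext; simp)
  -- D x - (c+1) x is constant on s
  have hDaff : ∀ x ∈ s, ∀ y ∈ s, D x - (c + 1) * x = D y - (c + 1) * y := by
    intro x hx y hy
    have hcv : Convex ℝ s := convex_Ioo 0 xs
    have hdh : DifferentiableOn ℝ (fun z => D z - (c + 1) * z) s :=
      hDdiff.sub ((differentiable_id.const_mul (c + 1)).differentiableOn)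
    have := hcv.is_const_of_fderivWithin_eq_zero hdh ?_ hx hy
    · exact this
    intro z hz
    have hd : HasDerivAt (fun z => D z - (c + 1) * z) 0 z := by
      have h1 : HasDerivAt D (deriv D z) z := (hdiffat_D z hz).hasDerivAt
      have h2 : HasDerivAt (fun z => (c + 1) * z) (c + 1) z := by
        simpa using (hasDerivAt_id z).const_mul (c + 1)
      have := h1.sub h2
      rw [hconstD z hz, sub_self] at this
      exact this
    rw [fderivWithin_of_isOpen hsopen hz]
    exact hd.hasFDerivAt.fderiv.trans (by ext; simp)
  set b : ℝ := D m - (c + 1) * m with hb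
  have hDform : ∀ x ∈ s, D x = (c + 1) * x + b := by
    intro x hx
    have := hDaff x hx m hms
    rw [hb]; linarith
  -- b = 0 from the limit
  have hb0 : b = 0 := by
    have hev : D =ᶠ[nhdsWithin 0 (Set.Ioi 0)] (fun x => (c + 1) * x + b) := by
      have hmem : s ∈ nhdsWithin 0 (Set.Ioi 0) := by
        rw [hs]
        have : Set.Ioo (0:ℝ) xs = Set.Ioi 0 ∩ Set.Iio xs := by
          ext z; simp [Set.mem_Ioo, Set.mem_Ioi, Set.mem_Iio, and_comm]
        rw [this]
        exact Filter.inter_mem self_mem_nhdsWithin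
          (nhdsWithin_le_nhds (Iio_mem_nhds hxs))
      exact Filter.eventuallyEq_of_mem hmem hDform
    have h1 : Filter.Tendsto (fun x => (c + 1) * x + b) (nhdsWithin 0 (Set.Ioi 0)) (nhds b) := by
      have : Filter.Tendsto (fun x => (c + 1) * x + b) (nhds (0:ℝ)) (nhds ((c + 1) * 0 + b)) := by
        exact (((continuous_const.mul continuous_id).add continuous_const).tendsto 0)
      simpa using this.mono_left nhdsWithin_le_nhds
    have h2 : Filter.Tendsto D (nhdsWithin 0 (Set.Ioi 0)) (nhds b) :=
      h1.congr' hev.symm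
    exact tendsto_nhds_unique h2 hDlim
  refine ⟨-c, ?_, ?_⟩
  · intro x hx
    have := hDform x hx
    rw [hb0] at this
    rw [this]; ring
  · intro x hx y hy
    have := hgaff x hx y hy
    have : g x - g y = c * (x - y) := by linarith
    rw [this]; ring
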